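/- arXiv:2008.03399 — 2 statements merged into one kernel-verified Lean document; each statement's English description precedes it below -/
import Mathlib

section
/- Let X be an n×d complex matrix with rows x_1, …, x_n ∈ ℂ^d, let W = X Xᵀ (transpose without conjugation), let c be a cluster assignment of the n points into K clusters in which every cluster is nonempty, let μ_k = (1/n_k) Σ_{i : c(i)=k} x_i, and let H̃ be the normalized indicator matrix of c. Then the complex bilinear kernel K-means objective satisfies Σ_{i=1}^{n} Σ_{t=1}^{d} (x_{i,t} − μ_{c(i),t})² = tr(W) − tr(H̃ᵀ W H̃), an identity of complex numbers. -/
open Matrix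

/-- Complex bilinear kernel K-means identity: for an `n × d` complex matrix `X`
with rows `x_i`, `W = X Xᵀ` (transpose without conjugation), a cluster assignment
`c` into `K` nonempty clusters with (complex) centroids `μ_k`, and the normalized
indicator matrix `H̃` viewed as a complex matrix, we have the identity of complex
numbers `Σ_i Σ_t (x_{i,t} − μ_{c i, t})² = tr(W) − tr(H̃ᵀ W H̃)`. -/
theorem complex_bilinear_kernel_kmeans_trace
    {n K d : ℕ} (X : Matrix (Fin n) (Fin d) ℂ) (c : Fin n → Fin K)
    (hne : ∀ k, 1 ≤ (Finset.univ.filter (fun i => c i = k)).card)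
    (W : Matrix (Fin n) (Fin n) ℂ) (hW : W = X * Xᵀ)
    (μ : Fin K → Fin d → ℂ)
    (hμ : ∀ k, μ k = (((Finset.univ.filter (fun i => c i = k)).card : ℂ))⁻¹ •
      ∑ i ∈ Finset.univ.filter (fun i => c i = k), X i)
    (Ht : Matrix (Fin n) (Fin K) ℂ)
    (hHt : ∀ i k, Ht i k =
      if c i = k then ((Real.sqrt ((Finset.univ.filter (fun j => c j = k)).card) : ℝ) : ℂ)⁻¹
      else 0) :
    ∑ i, ∑ t, (X i t - μ (c i) t) ^ 2 = W.trace - (Htᵀ * W * Ht).trace := by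
  classical
  subst hW
  set A : Fin K → Finset (Fin n) := fun k => Finset.univ.filter (fun i => c i = k) with hA
  set N : Fin K → ℂ := fun k => ((A k).card : ℂ) with hN
  have hN0 : ∀ k, N k ≠ 0 := by
    intro k
    have h := hne k
    simp only [hN]
    exact_mod_cast Nat.one_le_iff_ne_zero.mp h
  set S : Fin K → Fin d → ℂ := fun k t => ∑ i ∈ A k, X i t with hS
  set a : Fin K → ℂ :=
    fun k => ((Real.sqrt ((Finset.univ.filter (fun j => c j = k)).card) : ℝ) : ℂ)⁻¹ with haa
  have ha : ∀ k, a k * a k = (N k)⁻¹ := by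
    intro k
    rw [haa, ← mul_inv]
    congr 1
    rw [← Complex.ofReal_mul, Real.mul_self_sqrt (Nat.cast_nonneg _)]
    push_cast
    rfl
  have hμ' : ∀ k t, μ k t = (N k)⁻¹ * S k t := by
    intro k t
    rw [hμ k]
    simp [hS, hN, hA, Finset.sum_apply]
    exact Or.inl (Finset.sum_apply _ _ _)
  have hLHS : ∑ i, ∑ t, (X i t - μ (c i) t) ^ 2
      = ∑ k, ((∑ i ∈ A k, ∑ t, X i t ^ 2) - ∑ t, S k t ^ 2 / N k) := by
    rw [← Finset.sum_fiberwise Finset.univ c (fun i => ∑ t, (X i t - μ (c i) t) ^ 2)]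
    refine Finset.sum_congr rfl fun k _ => ?_
    have hmem : ∀ i ∈ A k, c i = k := by
      intro i hi; simpa [hA] using hi
    calc ∑ i ∈ A k, ∑ t, (X i t - μ (c i) t) ^ 2
        = ∑ i ∈ A k, ∑ t, (X i t - μ k t) ^ 2 := by
          refine Finset.sum_congr rfl fun i hi => ?_
          rw [hmem i hi]
      _ = ∑ t, ∑ i ∈ A k, (X i t - μ k t) ^ 2 := Finset.sum_comm
      _ = ∑ t, ((∑ i ∈ A k, X i t ^ 2) - S k t ^ 2 / N k) := by
          refine Finset.sum_congr rfl fun t _ => ?_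
          have hSe : S k t = ∑ i ∈ A k, X i t := rfl
          have hNe : ((A k).card : ℂ) = N k := rfl
          have hexp : ∀ i ∈ A k, (X i t - μ k t) ^ 2
              = X i t ^ 2 - 2 * μ k t * X i t + μ k t ^ 2 := fun i _ => by ring
          rw [Finset.sum_congr rfl hexp, Finset.sum_add_distrib, Finset.sum_sub_distrib,
            Finset.sum_const, ← Finset.mul_sum, nsmul_eq_mul, hNe, ← hSe, hμ' k t]
          field_simp [hN0 k]
          ring
      _ = (∑ t, ∑ i ∈ A k, X i t ^ 2) - ∑ t, S k t ^ 2 / N k := by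
          rw [Finset.sum_sub_distrib]
      _ = (∑ i ∈ A k, ∑ t, X i t ^ 2) - ∑ t, S k t ^ 2 / N k := by
          rw [Finset.sum_comm]
  have htrW : (X * Xᵀ).trace = ∑ k, ∑ i ∈ A k, ∑ t, X i t ^ 2 := by
    rw [Finset.sum_fiberwise Finset.univ c (fun i => ∑ t, X i t ^ 2)]
    simp [Matrix.trace, Matrix.mul_apply, Matrix.diag, sq]
  have htrH : (Htᵀ * (X * Xᵀ) * Ht).trace = ∑ k, ∑ t, S k t ^ 2 / N k := by
    rw [Matrix.trace]
    refine Finset.sum_congr rfl fun k _ => ?_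
    have hdiag : (Htᵀ * (X * Xᵀ) * Ht).diag k
        = ∑ j, (∑ i, Ht i k * (X * Xᵀ) i j) * Ht j k := by
      simp [Matrix.diag, Matrix.mul_apply, Matrix.transpose_apply]
    rw [hdiag]
    have h1 : ∀ j, (∑ i, Ht i k * (X * Xᵀ) i j)
        = a k * ∑ i ∈ A k, (X * Xᵀ) i j := by
      intro j
      rw [Finset.mul_sum]
      rw [show (∑ i ∈ A k, a k * (X * Xᵀ) i j)
          = ∑ i, if c i = k then a k * (X * Xᵀ) i j else 0 from Finset.sum_filter _ _]
      refine Finset.sum_congr rfl fun i _ => ?_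
      rw [hHt i k]
      by_cases h : c i = k <;> simp [h, haa]
    calc (∑ j, (∑ i, Ht i k * (X * Xᵀ) i j) * Ht j k)
        = ∑ j, (if c j = k then (a k * ∑ i ∈ A k, (X * Xᵀ) i j) * a k else 0) := by
          refine Finset.sum_congr rfl fun j _ => ?_
          rw [h1 j, hHt j k]
          by_cases h : c j = k <;> simp [h, haa]
      _ = ∑ j ∈ A k, (a k * ∑ i ∈ A k, (X * Xᵀ) i j) * a k :=
          (Finset.sum_filter _ _).symm
      _ = a k * a k * ∑ j ∈ A k, ∑ i ∈ A k, (X * Xᵀ) i j := by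
          rw [Finset.mul_sum]
          refine Finset.sum_congr rfl fun j _ => ?_
          ring
      _ = (N k)⁻¹ * ∑ j ∈ A k, ∑ i ∈ A k, ∑ t, X i t * X j t := by
          rw [ha k]
          simp only [Matrix.mul_apply, Matrix.transpose_apply]
      _ = (N k)⁻¹ * ∑ t, ∑ j ∈ A k, ∑ i ∈ A k, X i t * X j t := by
          congr 1
          rw [show (∑ j ∈ A k, ∑ i ∈ A k, ∑ t, X i t * X j t)
              = ∑ j ∈ A k, ∑ t, ∑ i ∈ A k, X i t * X j t from
            Finset.sum_congr rfl fun j _ => Finset.sum_comm, Finset.sum_comm]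
      _ = ∑ t, S k t ^ 2 / N k := by
          rw [Finset.mul_sum]
          refine Finset.sum_congr rfl fun t _ => ?_
          have hSe : S k t = ∑ i ∈ A k, X i t := rfl
          have hthis : (∑ j ∈ A k, ∑ i ∈ A k, X i t * X j t) = S k t * S k t := by
            rw [hSe, Finset.sum_mul_sum]
            exact Finset.sum_comm
          rw [hthis, sq, div_eq_mul_inv]
          ring
  rw [hLHS, htrW, htrH, ← Finset.sum_sub_distrib]
end

section
/- Let x_1, …, x_n ∈ ℂ^d, let K_gram be the n×n Gram matrix with (K_gram)_{ij} = ⟨x_i, x_j⟩, and for a cluster assignment c into K nonempty clusters let J(c) = Σ_i ‖x_i − μ_{c(i)}‖² be the kernel K-means objective and H̃(c) the normalized indicator matrix. Then for any two cluster assignments c and c' into K nonempty clusters: J(c) ≤ J(c') if and only if Re tr(H̃(c')ᵀ K_gram H̃(c')) ≤ Re tr(H̃(c)ᵀ K_gram H̃(c)). In particular, c minimizes the kernel K-means objective over all assignments into K nonempty clusters if and only if c maximizes tr(H̃ᵀ K_gram H̃). -/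
open Matrix

/-- The size of cluster `k` under the assignment `c`. -/
def clusterSize {n K : ℕ} (c : Fin n → Fin K) (k : Fin K) : ℕ :=
  (Finset.univ.filter (fun i => c i = k)).card

/-- The centroid of cluster `k`. -/
noncomputable def centroid {n K d : ℕ} (x : Fin n → EuclideanSpace ℂ (Fin d))
    (c : Fin n → Fin K) (k : Fin K) : EuclideanSpace ℂ (Fin d) :=
  ((clusterSize c k : ℂ))⁻¹ • ∑ i ∈ Finset.univ.filter (fun i => c i = k), x i

/-- The kernel K-means objective `J(c) = Σ_i ‖x_i − μ_{c i}‖²`. -/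
noncomputable def kmeansObj {n K d : ℕ} (x : Fin n → EuclideanSpace ℂ (Fin d))
    (c : Fin n → Fin K) : ℝ :=
  ∑ i, ‖x i - centroid x c (c i)‖ ^ 2

/-- The normalized indicator matrix of `c`, viewed as a complex matrix. -/
noncomputable def normIndicator {n K : ℕ} (c : Fin n → Fin K) :
    Matrix (Fin n) (Fin K) ℂ :=
  fun i k => if c i = k then ((Real.sqrt (clusterSize c k) : ℝ) : ℂ)⁻¹ else 0

/-- The Gram matrix `K_gram i j = ⟨x i, x j⟩`. -/
noncomputable def gramMatrix {n d : ℕ} (x : Fin n → EuclideanSpace ℂ (Fin d)) :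
    Matrix (Fin n) (Fin n) ℂ :=
  fun i j => inner ℂ (x i) (x j)

/-- The sum of the points in cluster `k`. -/
noncomputable def clusterSum {n K d : ℕ} (x : Fin n → EuclideanSpace ℂ (Fin d))
    (c : Fin n → Fin K) (k : Fin K) : EuclideanSpace ℂ (Fin d) :=
  ∑ i ∈ Finset.univ.filter (fun i => c i = k), x i

lemma trace_eq_inner {n K d : ℕ} (x : Fin n → EuclideanSpace ℂ (Fin d))
    (c : Fin n → Fin K) :
    ((normIndicator c)ᵀ * gramMatrix x * normIndicator c).trace
      = ∑ k, (((Real.sqrt (clusterSize c k) : ℝ) : ℂ)⁻¹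
          * ((Real.sqrt (clusterSize c k) : ℝ) : ℂ)⁻¹) *
        (inner ℂ (clusterSum x c k) (clusterSum x c k) : ℂ) := by
  classical
  simp only [Matrix.trace, Matrix.diag, Matrix.mul_apply, Matrix.transpose_apply,
    normIndicator, gramMatrix, clusterSum]
  refine Finset.sum_congr rfl fun k _ => ?_
  rw [inner_sum, Finset.mul_sum, Finset.sum_filter]
  refine Finset.sum_congr rfl fun j _ => ?_
  by_cases hj : c j = k
  · simp only [hj, if_true, sum_inner, Finset.mul_sum, Finset.sum_filter, Finset.sum_mul]
    refine Finset.sum_congr rfl fun i _ => ?_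
    by_cases hi : c i = k <;> simp [hi] <;> ring
  · simp [hj]

lemma trace_re_eq {n K d : ℕ} (x : Fin n → EuclideanSpace ℂ (Fin d))
    (c : Fin n → Fin K) :
    ((normIndicator c)ᵀ * gramMatrix x * normIndicator c).trace.re
      = ∑ k, ((clusterSize c k : ℝ))⁻¹ * ‖clusterSum x c k‖ ^ 2 := by
  rw [trace_eq_inner]
  have : ∀ k : Fin K, (((Real.sqrt (clusterSize c k) : ℝ) : ℂ)⁻¹
          * ((Real.sqrt (clusterSize c k) : ℝ) : ℂ)⁻¹) *
        (inner ℂ (clusterSum x c k) (clusterSum x c k) : ℂ)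
      = ((((clusterSize c k : ℝ))⁻¹ * ‖clusterSum x c k‖ ^ 2 : ℝ) : ℂ) := by
    intro k
    rw [inner_self_eq_norm_sq_to_K]
    norm_cast
    rw [← mul_inv, Real.mul_self_sqrt (Nat.cast_nonneg _)]
    push_cast
    rfl
  simp only [this]
  rw [← Complex.ofReal_sum, Complex.ofReal_re]

lemma kmeansObj_eq {n K d : ℕ} (x : Fin n → EuclideanSpace ℂ (Fin d)) (c : Fin n → Fin K) :
    kmeansObj x c = (∑ i, ‖x i‖ ^ 2)
      - ∑ k, ((clusterSize c k : ℝ))⁻¹ * ‖clusterSum x c k‖ ^ 2 := by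
  classical
  have hexp : ∀ i, ‖x i - centroid x c (c i)‖ ^ 2
      = ‖x i‖ ^ 2 - 2 * (inner ℂ (x i) (centroid x c (c i)) : ℂ).re
        + ‖centroid x c (c i)‖ ^ 2 := fun i => by
    simpa using @norm_sub_sq ℂ _ _ _ _ (x i) (centroid x c (c i))
  rw [kmeansObj]
  simp only [hexp]
  rw [Finset.sum_add_distrib, Finset.sum_sub_distrib]
  have hfib : ∀ f : Fin n → ℝ, (∑ i, f i)
      = ∑ k, ∑ i ∈ Finset.univ.filter (fun i => c i = k), f i := fun f => by
    exact (Finset.sum_fiberwise Finset.univ c f).symm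
  have h1 : (∑ i, 2 * (inner ℂ (x i) (centroid x c (c i)) : ℂ).re)
      = 2 * ∑ k, ((clusterSize c k : ℝ))⁻¹ * ‖clusterSum x c k‖ ^ 2 := by
    rw [hfib, Finset.mul_sum]
    refine Finset.sum_congr rfl fun k _ => ?_
    have : ∀ i ∈ Finset.univ.filter (fun i => c i = k),
        2 * (inner ℂ (x i) (centroid x c (c i)) : ℂ).re
          = 2 * (inner ℂ (x i) (centroid x c k) : ℂ).re := by
      intro i hi
      simp only [Finset.mem_filter] at hi
      rw [hi.2]
    rw [Finset.sum_congr rfl this, ← Finset.mul_sum]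
    congr 1
    have : (∑ i ∈ Finset.univ.filter (fun i => c i = k),
        (inner ℂ (x i) (centroid x c k) : ℂ)).re
        = ((clusterSize c k : ℝ))⁻¹ * ‖clusterSum x c k‖ ^ 2 := by
      rw [← sum_inner]
      rw [show (∑ i ∈ Finset.univ.filter (fun i => c i = k), x i) = clusterSum x c k from rfl]
      rw [centroid, inner_smul_right]
      rw [show (∑ i ∈ Finset.univ.filter (fun i => c i = k), x i) = clusterSum x c k from rfl]
      rw [inner_self_eq_norm_sq_to_K]
      simp [← Complex.ofReal_pow, ← Complex.ofReal_inv, ← Complex.ofReal_mul]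
    rw [← this, Complex.re_sum]
  have h2 : (∑ i, ‖centroid x c (c i)‖ ^ 2)
      = ∑ k, ((clusterSize c k : ℝ))⁻¹ * ‖clusterSum x c k‖ ^ 2 := by
    rw [hfib]
    refine Finset.sum_congr rfl fun k _ => ?_
    have : ∀ i ∈ Finset.univ.filter (fun i => c i = k),
        ‖centroid x c (c i)‖ ^ 2 = ‖centroid x c k‖ ^ 2 := by
      intro i hi; simp only [Finset.mem_filter] at hi; rw [hi.2]
    rw [Finset.sum_congr rfl this, Finset.sum_const]
    rw [show (Finset.univ.filter (fun i => c i = k)).card = clusterSize c k from rfl]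
    rcases Nat.eq_zero_or_pos (clusterSize c k) with h0 | hpos
    · have hS : clusterSum x c k = 0 := by
        rw [clusterSum, Finset.card_eq_zero.mp h0, Finset.sum_empty]
      simp [h0, hS]
    · have hμ : ‖centroid x c k‖ ^ 2
          = ((clusterSize c k : ℝ))⁻¹ ^ 2 * ‖clusterSum x c k‖ ^ 2 := by
        rw [centroid, norm_smul]
        rw [show (∑ i ∈ Finset.univ.filter (fun i => c i = k), x i) = clusterSum x c k from rfl]
        rw [mul_pow]
        congr 1
        rw [norm_inv, Complex.norm_natCast]
      rw [hμ, nsmul_eq_mul]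
      have hne : (clusterSize c k : ℝ) ≠ 0 := by positivity
      field_simp
  rw [h1, h2, hfib fun i => ‖x i‖ ^ 2]
  ring

lemma kmeansObj_le_iff {n K d : ℕ} (x : Fin n → EuclideanSpace ℂ (Fin d))
    (c c' : Fin n → Fin K) :
    kmeansObj x c ≤ kmeansObj x c' ↔
      ((normIndicator c')ᵀ * gramMatrix x * normIndicator c').trace.re ≤
        ((normIndicator c)ᵀ * gramMatrix x * normIndicator c).trace.re := by
  rw [trace_re_eq, trace_re_eq, kmeansObj_eq, kmeansObj_eq]
  exact sub_le_sub_iff_left _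

/-- Minimizing the kernel K-means objective is equivalent to maximizing
`tr(H̃ᵀ K_gram H̃)`: for any two assignments `c, c'` into `K` nonempty clusters,
`J(c) ≤ J(c')` iff `Re tr(H̃(c')ᵀ K_gram H̃(c')) ≤ Re tr(H̃(c)ᵀ K_gram H̃(c))`;
in particular `c` minimizes `J` iff `c` maximizes the trace. -/
theorem kmeans_min_iff_trace_max
    {n K d : ℕ} (x : Fin n → EuclideanSpace ℂ (Fin d))
    (c c' : Fin n → Fin K)
    (hc : ∀ k, 1 ≤ clusterSize c k) (hc' : ∀ k, 1 ≤ clusterSize c' k) :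
    (kmeansObj x c ≤ kmeansObj x c' ↔
      ((normIndicator c')ᵀ * gramMatrix x * normIndicator c').trace.re ≤
        ((normIndicator c)ᵀ * gramMatrix x * normIndicator c).trace.re) ∧
    ((∀ c'' : Fin n → Fin K, (∀ k, 1 ≤ clusterSize c'' k) →
        kmeansObj x c ≤ kmeansObj x c'') ↔
      (∀ c'' : Fin n → Fin K, (∀ k, 1 ≤ clusterSize c'' k) →
        ((normIndicator c'')ᵀ * gramMatrix x * normIndicator c'').trace.re ≤
          ((normIndicator c)ᵀ * gramMatrix x * normIndicator c).trace.re)) := by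
  refine ⟨kmeansObj_le_iff x c c', ?_⟩
  exact forall_congr' fun c'' => imp_congr_right fun _ => kmeansObj_le_iff x c c''
end
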